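/- arXiv:1811.07606 — 9 statements merged into one kernel-verified Lean document; each statement's English description precedes it below -/
import Mathlib

section
/- Let X be a normal topological space and f : X → ℝ a function such that f⁻¹(G) is an F_σ subset of X for every open set G ⊆ ℝ. Then f is a Baire one function, i.e., f is the pointwise limit of a sequence of continuous real-valued functions on X. -/
open Set Filter Topology

/-- A function between topological spaces is *Baire one* if it is the pointwise
limit of a sequence of continuous functions. -/
def IsBaireOne {X Y : Type*} [TopologicalSpace X] [TopologicalSpace Y] (f : X → Y) : Prop :=
  ∃ F : ℕ → X → Y, (∀ n, Continuous (F n)) ∧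
    ∀ x, Filter.Tendsto (fun n => F n x) Filter.atTop (nhds (f x))

/-- A set is *Fσ* if it is a countable union of closed sets. -/
def IsFSigma {X : Type*} [TopologicalSpace X] (S : Set X) : Prop :=
  ∃ F : ℕ → Set X, (∀ n, IsClosed (F n)) ∧ S = ⋃ n, F n

section Aux
variable {X : Type*} [TopologicalSpace X] [NormalSpace X]

/-- Tietze-based gluing step: given closed `S`, `T`, a continuous `b` and `th` with
`|b - th| ≤ B` on `S ∩ T`, there is a continuous `u` equal to `b` on `S` and
with `|u - th| ≤ B` on `T`. -/
lemma glue_step {S T : Set X} (hS : IsClosed S) (hT : IsClosed T)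
    {b th : X → ℝ} (hb : Continuous b) (hth : Continuous th) {B : ℝ} (hB : 0 ≤ B)
    (hST : ∀ x ∈ S ∩ T, |b x - th x| ≤ B) :
    ∃ u : X → ℝ, Continuous u ∧ (∀ x ∈ S, u x = b x) ∧ ∀ x ∈ T, |u x - th x| ≤ B := by
  classical
  haveI : Set.OrdConnected (Icc (-B) B) := Set.ordConnected_Icc
  -- Tietze-extend `(b - th)|_{S∩T}` to all of `X` with bound `B`.
  set d : C(↥(S ∩ T), ℝ) := ⟨fun x => b x - th x,
    (hb.sub hth).comp continuous_subtype_val⟩ with hd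
  have hdmem : ∀ x : ↥(S ∩ T), d x ∈ Icc (-B) B := fun x => abs_le.1 (hST x x.2)
  obtain ⟨h, hhmem, hhd⟩ := ContinuousMap.exists_restrict_eq_forall_mem_of_closed d hdmem
    ⟨0, by simpa using hB⟩ (hS.inter hT)
  have hhEq : ∀ x ∈ S ∩ T, h x = b x - th x := by
    intro x hx
    have := congrFun (congrArg DFunLike.coe hhd) ⟨x, hx⟩
    exact this
  -- glue `b - th` on `S` with `h` on `T`.
  set e0 : X → ℝ := fun x => if x ∈ S then b x - th x else h x with he0
  have he0S : ∀ x ∈ S, e0 x = b x - th x := fun x hx => if_pos hx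
  have he0T : ∀ x ∈ T, e0 x = h x := by
    intro x hx
    by_cases hxS : x ∈ S
    · rw [he0]; simp only [if_pos hxS]; exact (hhEq x ⟨hxS, hx⟩).symm
    · exact if_neg hxS
  have he0cont : ContinuousOn e0 (S ∪ T) := by
    have hwS : ∀ x : X, ContinuousWithinAt e0 S x := by
      intro x
      by_cases hx : x ∈ S
      · exact (((hb.sub hth).continuousOn).congr he0S) x hx
      · exact continuousWithinAt_of_notMem_closure (by rwa [hS.closure_eq])
    have hwT : ∀ x : X, ContinuousWithinAt e0 T x := by
      intro x
      by_cases hx : x ∈ T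
      · exact ((h.continuous.continuousOn).congr he0T) x hx
      · exact continuousWithinAt_of_notMem_closure (by rwa [hT.closure_eq])
    intro x _
    exact ((hwS x).union (hwT x)).mono (le_refl _)
  -- Tietze-extend the glued function to all of `X`.
  haveI : Set.OrdConnected (univ : Set ℝ) := Set.ordConnected_univ
  set e1 : C(↥(S ∪ T), ℝ) := ⟨fun x => e0 x, by
    rw [continuousOn_iff_continuous_restrict] at he0cont; exact he0cont⟩ with he1
  obtain ⟨e, -, hee⟩ := ContinuousMap.exists_restrict_eq_forall_mem_of_closed e1
    (fun x => mem_univ _) ⟨0, mem_univ _⟩ (hS.union hT)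
  have heEq : ∀ x ∈ S ∪ T, e x = e0 x := by
    intro x hx
    have := congrFun (congrArg DFunLike.coe hee) ⟨x, hx⟩
    exact this
  refine ⟨fun x => th x + e x, hth.add e.continuous, ?_, ?_⟩
  · intro x hx
    show th x + e x = b x
    rw [heEq x (Or.inl hx), he0S x hx]; ring
  · intro x hx
    show |th x + e x - th x| ≤ B
    rw [heEq x (Or.inr hx), he0T x hx]
    have := hhmem x
    rw [mem_Icc] at this
    rw [abs_le]
    constructor <;> linarith [this.1, this.2]

end Aux

section Aux2
variable {X : Type*} [TopologicalSpace X] [NormalSpace X]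

/-- Urysohn-sum approximation at one scale: given finitely many closed sets on which `g`
lies in the interval `(c + k*dl, c + k*dl + 2*dl)`, there is a continuous function that is
`2*dl`-close to `g` on their union. -/
lemma scale_approx {g : X → ℝ} {dl : ℝ} (hdl : 0 < dl) (c : ℝ) (N : ℕ) (F : ℕ → Set X)
    (hFc : ∀ k, IsClosed (F k))
    (hFv : ∀ k, ∀ x ∈ F k, c + k * dl < g x ∧ g x < c + k * dl + 2 * dl) :
    ∃ u : X → ℝ, Continuous u ∧
      ∀ x ∈ ⋃ k ∈ Finset.range (N + 1), F k, |u x - g x| ≤ 2 * dl := by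
  classical
  set H : ℕ → Set X := fun k => ⋃ j ∈ Finset.Icc k N, F j with hH
  set M : ℕ → Set X := fun k => ⋃ j ∈ Finset.range (k - 1), F j with hM
  have hHc : ∀ k, IsClosed (H k) := fun k =>
    (Finset.Icc k N).finite_toSet.isClosed_biUnion fun j _ => hFc j
  have hMc : ∀ k, IsClosed (M k) := fun k =>
    (Finset.range (k - 1)).finite_toSet.isClosed_biUnion fun j _ => hFc j
  have hdisj : ∀ k, Disjoint (M k) (H k) := by
    intro k
    rw [Set.disjoint_left]
    rintro x hxM hxH
    simp only [hM, hH, Set.mem_iUnion, Finset.mem_range, Finset.mem_Icc] at hxM hxH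
    obtain ⟨j, hj, hxj⟩ := hxM
    obtain ⟨j', ⟨hj'1, hj'2⟩, hxj'⟩ := hxH
    have h1 := (hFv j x hxj).2
    have h2 := (hFv j' x hxj').1
    have hlt : (j' : ℝ) * dl < (j : ℝ) * dl + 2 * dl := by linarith
    have : (j' : ℝ) < (j : ℝ) + 2 := by
      nlinarith
    have hj'j : j' < j + 2 := by exact_mod_cast this
    omega
  have hφ : ∀ k : ℕ, ∃ φ : C(X, ℝ), EqOn φ 0 (M k) ∧ EqOn φ 1 (H k) ∧
      ∀ x, φ x ∈ Icc (0 : ℝ) 1 :=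
    fun k => exists_continuous_zero_one_of_isClosed (hMc k) (hHc k) (hdisj k)
  choose φ hφ0 hφ1 hφ01 using hφ
  refine ⟨fun x => (c + dl) + dl * ∑ k ∈ Finset.Icc 1 N, φ k x,
    continuous_const.add (continuous_const.mul (continuous_finset_sum _ fun k _ => (φ k).continuous)), ?_⟩
  intro x hx
  simp only [Set.mem_iUnion] at hx
  obtain ⟨k₀, hk₀N, hxk₀⟩ := hx
  rw [Finset.mem_range] at hk₀N
  set Kx : Finset ℕ := (Finset.range (N + 1)).filter (fun k => x ∈ F k) with hKx
  have hKxne : Kx.Nonempty := ⟨k₀, by simp [hKx, Finset.mem_filter, Finset.mem_range, hk₀N, hxk₀]⟩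
  set kM := Kx.max' hKxne with hkM
  set km := Kx.min' hKxne with hkm
  have hkMmem := Kx.max'_mem hKxne
  have hkmmem := Kx.min'_mem hKxne
  have hkMF : x ∈ F kM := (Finset.mem_filter.mp hkMmem).2
  have hkmF : x ∈ F km := (Finset.mem_filter.mp hkmmem).2
  have hkMN : kM ≤ N := by
    have := Finset.mem_range.mp (Finset.mem_filter.mp hkMmem).1
    omega
  -- lower bound for the sum
  have hsum_low : (kM : ℝ) ≤ ∑ k ∈ Finset.Icc 1 N, φ k x := by
    have hsub : Finset.Icc 1 kM ⊆ Finset.Icc 1 N := Finset.Icc_subset_Icc_right hkMN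
    have hone : ∀ k ∈ Finset.Icc 1 kM, φ k x = 1 := by
      intro k hk
      rw [Finset.mem_Icc] at hk
      have : x ∈ H k := by
        simp only [hH, Set.mem_iUnion, Finset.mem_Icc]
        exact ⟨kM, ⟨hk.2, hkMN⟩, hkMF⟩
      simpa using hφ1 k this
    calc (kM : ℝ) = ∑ k ∈ Finset.Icc 1 kM, (1 : ℝ) := by
          rw [Finset.sum_const, Nat.card_Icc]; simp
      _ = ∑ k ∈ Finset.Icc 1 kM, φ k x := by
          exact (Finset.sum_congr rfl hone).symm
      _ ≤ ∑ k ∈ Finset.Icc 1 N, φ k x := by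
          apply Finset.sum_le_sum_of_subset_of_nonneg hsub
          intro k _ _
          exact (hφ01 k x).1
  -- upper bound for the sum
  have hsum_high : ∑ k ∈ Finset.Icc 1 N, φ k x ≤ (km : ℝ) + 1 := by
    have hbound : ∀ k ∈ Finset.Icc 1 N, φ k x ≤ (if k ≤ km + 1 then (1:ℝ) else 0) := by
      intro k hk
      by_cases hkkm : k ≤ km + 1
      · rw [if_pos hkkm]; exact (hφ01 k x).2
      · rw [if_neg hkkm]
        have : x ∈ M k := by
          simp only [hM, Set.mem_iUnion, Finset.mem_range]
          exact ⟨km, by omega, hkmF⟩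
        exact le_of_eq (by simpa using hφ0 k this)
    calc ∑ k ∈ Finset.Icc 1 N, φ k x ≤ ∑ k ∈ Finset.Icc 1 N, (if k ≤ km + 1 then (1:ℝ) else 0) :=
          Finset.sum_le_sum hbound
      _ = ((Finset.Icc 1 N).filter (fun k => k ≤ km + 1)).card := by
          rw [Finset.sum_ite, Finset.sum_const, Finset.sum_const]; simp
      _ ≤ ((Finset.Icc 1 (km + 1))).card := by
          have : ((Finset.Icc 1 N).filter (fun k => k ≤ km + 1)) ⊆ Finset.Icc 1 (km + 1) := by
            intro k hk
            rw [Finset.mem_filter, Finset.mem_Icc] at hk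
            rw [Finset.mem_Icc]
            exact ⟨hk.1.1, hk.2⟩
          exact_mod_cast Finset.card_le_card this
      _ = (km : ℝ) + 1 := by rw [Nat.card_Icc]; push_cast; ring
  have hvm := hFv km x hkmF
  have hvM := hFv kM x hkMF
  have h1 : dl * ∑ k ∈ Finset.Icc 1 N, φ k x ≤ dl * ((km : ℝ) + 1) :=
    mul_le_mul_of_nonneg_left hsum_high hdl.le
  have h2 : dl * (kM : ℝ) ≤ dl * ∑ k ∈ Finset.Icc 1 N, φ k x :=
    mul_le_mul_of_nonneg_left hsum_low hdl.le
  show |c + dl + dl * ∑ k ∈ Finset.Icc 1 N, φ k x - g x| ≤ 2 * dl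
  rw [abs_le]
  constructor
  · nlinarith [hvM.2, h2]
  · nlinarith [hvm.1, h1]

end Aux2

theorem isBaireOne_of_preimage_open_isFSigma {X : Type*} [TopologicalSpace X] [NormalSpace X]
    (f : X → ℝ) (hf : ∀ G : Set ℝ, IsOpen G → IsFSigma (f ⁻¹' G)) :
    IsBaireOne f := by
  classical
  set g : X → ℝ := fun x => Real.arctan (f x) with hgdef
  have hpi2 : Real.pi / 2 < 2 := by linarith [Real.pi_lt_d2]
  have hgpi : ∀ x, |g x| < Real.pi / 2 := by
    intro x
    rw [abs_lt]
    exact ⟨Real.neg_pi_div_two_lt_arctan (f x), Real.arctan_lt_pi_div_two (f x)⟩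
  have hgb : ∀ x, |g x| < 2 := fun x => lt_trans (hgpi x) hpi2
  have hFg : ∀ U : Set ℝ, IsOpen U → IsFSigma (g ⁻¹' U) := by
    intro U hU
    exact hf _ (hU.preimage Real.continuous_arctan)
  -- scales
  set dl : ℕ → ℝ := fun m => (1 / 2 : ℝ) ^ m with hdl
  have hdlpos : ∀ m, 0 < dl m := fun m => pow_pos (by norm_num) m
  set N : ℕ → ℕ := fun m => 2 ^ (m + 2) with hN
  set a : ℕ → ℕ → ℝ := fun m k => -2 + k * dl m with ha
  set J : ℕ → ℕ → Set ℝ := fun m k => Ioo (a m k) (a m k + 2 * dl m) with hJ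
  -- closed exhaustions of the pullbacks of the intervals
  have HFr : ∀ m k : ℕ, ∃ Fr : ℕ → Set X, (∀ n, IsClosed (Fr n)) ∧ g ⁻¹' (J m k) = ⋃ n, Fr n :=
    fun m k => hFg (J m k) isOpen_Ioo
  choose Fr hFrC hFrU using HFr
  set Fam : ℕ → ℕ → ℕ → Set X := fun m k i => ⋃ j ∈ Finset.range (i + 1), Fr m k j with hFam
  have hFamC : ∀ m k i, IsClosed (Fam m k i) := fun m k i =>
    (Finset.range (i + 1)).finite_toSet.isClosed_biUnion fun j _ => hFrC m k j
  have hFamMono : ∀ m k, ∀ {i i'}, i ≤ i' → Fam m k i ⊆ Fam m k i' := by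
    intro m k i i' hii' x hx
    simp only [hFam, Set.mem_iUnion, Finset.mem_range, exists_prop] at hx ⊢
    obtain ⟨j, hj, hxj⟩ := hx
    exact ⟨j, by omega, hxj⟩
  have hFamSub : ∀ m k i, Fam m k i ⊆ g ⁻¹' (J m k) := by
    intro m k i
    rw [hFrU m k]
    exact Set.iUnion₂_subset fun j _ => Set.subset_iUnion _ j
  have hFamCov : ∀ m k x, x ∈ g ⁻¹' (J m k) → ∃ i, x ∈ Fam m k i := by
    intro m k x hx
    rw [hFrU m k] at hx
    obtain ⟨j, hj⟩ := Set.mem_iUnion.1 hx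
    refine ⟨j, ?_⟩
    simp only [hFam, Set.mem_iUnion, Finset.mem_range, exists_prop]
    exact ⟨j, by omega, hj⟩
  set D : ℕ → ℕ → Set X := fun m i => ⋃ k ∈ Finset.range (N m + 1), Fam m k i with hD
  have hDC : ∀ m i, IsClosed (D m i) := fun m i =>
    (Finset.range (N m + 1)).finite_toSet.isClosed_biUnion fun k _ => hFamC m k i
  have hDmono : ∀ m, ∀ {i i'}, i ≤ i' → D m i ⊆ D m i' := by
    intro m i i' hii'
    exact Set.iUnion₂_mono fun k _ => hFamMono m k hii'
  -- coverage: every point lies in some interval of each scale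
  have hcov : ∀ (m : ℕ) (x : X), ∃ k, k ≤ N m ∧ g x ∈ J m k := by
    intro m x
    have hb := hgb x
    rw [abs_lt] at hb
    set v := g x with hv
    set y : ℝ := (v + 2) / dl m with hy
    have hypos : 0 < y := div_pos (by linarith) (hdlpos m)
    have hceil1 : (1 : ℤ) ≤ ⌈y⌉ := by
      by_contra h
      push_neg at h
      have h0 : ⌈y⌉ ≤ 0 := by omega
      have : ((⌈y⌉ : ℤ) : ℝ) ≤ 0 := by exact_mod_cast h0
      linarith [Int.le_ceil y]
    set k : ℕ := (⌈y⌉ - 1).toNat with hk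
    have hkz : (k : ℝ) = ((⌈y⌉ : ℤ) : ℝ) - 1 := by
      have h1 : ((k : ℕ) : ℤ) = ⌈y⌉ - 1 := Int.toNat_of_nonneg (by omega)
      have := congrArg (fun z : ℤ => (z : ℝ)) h1
      push_cast at this
      linarith
    have hky : (k : ℝ) < y := by
      rw [hkz]; linarith [Int.ceil_lt_add_one y]
    have hyk : y ≤ (k : ℝ) + 1 := by
      rw [hkz]; linarith [Int.le_ceil y]
    have hprod : (2 : ℝ) ^ (m + 2) * dl m = 4 := by
      have h2 : (2 : ℝ) ^ m * (1 / 2 : ℝ) ^ m = 1 := by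
        rw [← mul_pow]; norm_num
      have hdlm : dl m = (1 / 2 : ℝ) ^ m := rfl
      rw [hdlm, pow_add]
      nlinarith [h2]
    have hyN : y < (2 : ℝ) ^ (m + 2) := by
      rw [hy, div_lt_iff₀ (hdlpos m)]
      rw [hprod]
      linarith
    have hkN : k ≤ N m := by
      have h1 : (k : ℝ) < (2 : ℝ) ^ (m + 2) := lt_trans hky hyN
      have h2 : ((N m : ℕ) : ℝ) = (2 : ℝ) ^ (m + 2) := by
        have : N m = 2 ^ (m + 2) := rfl
        rw [this]; push_cast; ring
      have h3 : (k : ℝ) < ((N m : ℕ) : ℝ) := by rw [h2]; exact h1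
      exact le_of_lt (by exact_mod_cast h3)
    refine ⟨k, hkN, ?_⟩
    have hymul : y * dl m = v + 2 := div_mul_cancel₀ _ (hdlpos m).ne'
    have haa : a m k = -2 + (k : ℝ) * dl m := rfl
    constructor
    · show a m k < v
      have h5 := mul_lt_mul_of_pos_right hky (hdlpos m)
      rw [hymul] at h5
      linarith
    · show v < a m k + 2 * dl m
      have h1 : y * dl m ≤ ((k : ℝ) + 1) * dl m :=
        mul_le_mul_of_nonneg_right hyk (hdlpos m).le
      rw [hymul] at h1
      have h6 := hdlpos m
      nlinarith
  have hDcov : ∀ m x, ∃ i, x ∈ D m i := by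
    intro m x
    obtain ⟨k, hkN, hkJ⟩ := hcov m x
    obtain ⟨i, hi⟩ := hFamCov m k x hkJ
    refine ⟨i, ?_⟩
    simp only [hD, Set.mem_iUnion, Finset.mem_range, exists_prop]
    exact ⟨k, by omega, hi⟩
  -- single-scale approximations
  have hscale : ∀ m i, ∃ u : X → ℝ, Continuous u ∧
      ∀ x ∈ D m i, |u x - g x| ≤ 2 * dl m := by
    intro m i
    apply scale_approx (hdlpos m) (-2) (N m) (fun k => Fam m k i) (fun k => hFamC m k i)
    intro k x hx
    have hmem := hFamSub m k i hx
    have hJa : J m k = Ioo (a m k) (a m k + 2 * dl m) := rfl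
    have haa : a m k = -2 + (k : ℝ) * dl m := rfl
    rw [hJa] at hmem
    simp only [mem_preimage, mem_Ioo] at hmem
    constructor
    · linarith [hmem.1]
    · linarith [hmem.2]
  choose th hthc htha using hscale
  set kap : ℕ → ℝ := fun m => 8 * dl m with hkap
  have hkapmono : ∀ {m m'}, m ≤ m' → kap m' ≤ kap m := by
    intro m m' h
    have hd : dl m' ≤ dl m := pow_le_pow_of_le_one (by norm_num) (by norm_num) h
    show 8 * dl m' ≤ 8 * dl m
    linarith
  -- multiscale stage construction
  have stage : ∀ t, ∃ u : X → ℝ, Continuous u ∧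
      ∀ m, m ≤ t → ∀ x ∈ D m t, |u x - g x| ≤ kap m := by
    intro t
    have key : ∀ r, ∃ u : X → ℝ, Continuous u ∧
        ∀ m, t - r ≤ m → m ≤ t → ∀ x ∈ D m t, |u x - g x| ≤ kap m := by
      intro r
      induction r with
      | zero =>
        refine ⟨th t t, hthc t t, ?_⟩
        intro m hm1 hm2 x hx
        have hmt : m = t := by omega
        rw [hmt] at hx ⊢
        show |th t t x - g x| ≤ 8 * dl t
        linarith [htha t t x hx, hdlpos t]
      | succ r ih =>
        obtain ⟨b, hbc, hbacc⟩ := ih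
        by_cases hrt : t ≤ r
        · exact ⟨b, hbc, fun m hm1 hm2 => hbacc m (by omega) hm2⟩
        · push_neg at hrt
          set m := t - r - 1 with hm
          set S : Set X := ⋃ m' ∈ Finset.Icc (m + 1) t, D m' t with hS
          have hSc : IsClosed S :=
            (Finset.Icc (m + 1) t).finite_toSet.isClosed_biUnion fun m' _ => hDC m' t
          have hkap4 : kap (m + 1) = 4 * dl m := by
            show 8 * dl (m + 1) = 4 * dl m
            show 8 * (1 / 2 : ℝ) ^ (m + 1) = 4 * (1 / 2 : ℝ) ^ m
            rw [pow_succ]; ring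
          have hyp : ∀ x ∈ S ∩ D m t, |b x - th m t x| ≤ 6 * dl m := by
            intro x hx
            obtain ⟨hxS, hxT⟩ := hx
            simp only [hS, Set.mem_iUnion, Finset.mem_Icc, exists_prop] at hxS
            obtain ⟨m', ⟨hm'1, hm'2⟩, hxm'⟩ := hxS
            have h1 : |b x - g x| ≤ kap m' := hbacc m' (by omega) hm'2 x hxm'
            have h2 : kap m' ≤ kap (m + 1) := hkapmono hm'1
            have h4 := htha m t x hxT
            have h5 : |b x - th m t x| ≤ |b x - g x| + |g x - th m t x| := abs_sub_le _ _ _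
            rw [abs_sub_comm (g x)] at h5
            linarith
          obtain ⟨u, huc, huS, huT⟩ := glue_step (b := b) (th := th m t) (B := 6 * dl m)
            hSc (hDC m t) hbc (hthc m t) (by linarith [hdlpos m]) hyp
          refine ⟨u, huc, ?_⟩
          intro m' hm1 hm2 x hx
          by_cases hm' : m + 1 ≤ m'
          · have hxS : x ∈ S := by
              simp only [hS, Set.mem_iUnion, Finset.mem_Icc, exists_prop]
              exact ⟨m', ⟨by omega, hm2⟩, hx⟩
            rw [huS x hxS]
            exact hbacc m' (by omega) hm2 x hx
          · have hm'm : m' = m := by omega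
            rw [hm'm] at hx ⊢
            have h1 := huT x hx
            have h2 := htha m t x hx
            have h3 : |u x - g x| ≤ |u x - th m t x| + |th m t x - g x| := abs_sub_le _ _ _
            show |u x - g x| ≤ 8 * dl m
            linarith
    obtain ⟨u, huc, hacc⟩ := key t
    exact ⟨u, huc, fun m hm => hacc m (by omega) hm⟩
  choose Th hThc hThacc using stage
  -- pointwise convergence of the stages to g
  have hconv : ∀ x, Tendsto (fun t => Th t x) atTop (𝓝 (g x)) := by
    intro x
    rw [Metric.tendsto_atTop]
    intro ε hε
    obtain ⟨m, hm⟩ := exists_pow_lt_of_lt_one (show (0:ℝ) < ε / 8 by linarith)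
      (show (1/2 : ℝ) < 1 by norm_num)
    have hkapm : kap m < ε := by
      show 8 * dl m < ε
      show 8 * (1/2 : ℝ) ^ m < ε
      linarith
    obtain ⟨i₀, hi₀⟩ := hDcov m x
    refine ⟨max m i₀, fun t ht => ?_⟩
    have hmt : m ≤ t := le_trans (le_max_left _ _) ht
    have hit : i₀ ≤ t := le_trans (le_max_right _ _) ht
    have hxD : x ∈ D m t := hDmono m hit hi₀
    have := hThacc t m hmt x hxD
    rw [Real.dist_eq]
    linarith
  -- transfer back through tan with clamping
  set c : ℕ → ℝ := fun t => Real.pi / 2 - 1 / ((t : ℝ) + 1) with hc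
  have hcpos : ∀ t, 0 < c t := by
    intro t
    show 0 < Real.pi / 2 - 1 / ((t : ℝ) + 1)
    have h1 : (1 : ℝ) / ((t : ℝ) + 1) ≤ 1 := by
      rw [div_le_one (by positivity)]
      linarith [Nat.cast_nonneg (α := ℝ) t]
    linarith [Real.pi_gt_three]
  have hclt : ∀ t, c t < Real.pi / 2 := by
    intro t
    have h : (0:ℝ) < 1 / ((t : ℝ) + 1) := by positivity
    show Real.pi / 2 - 1 / ((t : ℝ) + 1) < Real.pi / 2
    linarith
  set clamp : ℕ → X → ℝ := fun t x => max (-(c t)) (min (c t) (Th t x)) with hclamp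
  have hclampmem : ∀ t x, clamp t x ∈ Ioo (-(Real.pi / 2)) (Real.pi / 2) := by
    intro t x
    have h1 : -(c t) ≤ clamp t x := le_max_left _ _
    have h2 : clamp t x ≤ c t := by
      show max (-(c t)) (min (c t) (Th t x)) ≤ c t
      apply max_le
      · linarith [hcpos t]
      · exact min_le_left _ _
    constructor
    · exact lt_of_lt_of_le (neg_lt_neg (hclt t)) h1
    · exact lt_of_le_of_lt h2 (hclt t)
  set FF : ℕ → X → ℝ := fun t x => Real.tan (clamp t x) with hFF
  refine ⟨FF, ?_, ?_⟩
  · intro t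
    have hclampc : Continuous (clamp t) := by
      show Continuous fun x => max (-(c t)) (min (c t) (Th t x))
      exact continuous_const.max (continuous_const.min (hThc t))
    have hcont : Continuous (Real.tan ∘ clamp t) :=
      Real.continuousOn_tan.comp_continuous hclampc
        (fun x => ne_of_gt (Real.cos_pos_of_mem_Ioo (hclampmem t x)))
    exact hcont
  · intro x
    have hgx := hgpi x
    obtain ⟨η, hη⟩ : ∃ e : ℝ, e = (Real.pi / 2 - |g x|) / 2 := ⟨_, rfl⟩
    have hηpos : 0 < η := by rw [hη]; linarith
    have ev1 : ∀ᶠ t in atTop, |Th t x - g x| < η := by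
      obtain ⟨T, hT⟩ := Metric.tendsto_atTop.mp (hconv x) η hηpos
      rw [eventually_atTop]
      exact ⟨T, fun t ht => by rw [← Real.dist_eq]; exact hT t ht⟩
    have ev2 : ∀ᶠ t : ℕ in atTop, 1 / ((t : ℝ) + 1) < η :=
      tendsto_one_div_add_atTop_nhds_zero_nat.eventually (gt_mem_nhds hηpos)
    have evEq : ∀ᶠ t in atTop, Real.tan (Th t x) = FF t x := by
      filter_upwards [ev1, ev2] with t h1 h2
      have hc' : c t = Real.pi / 2 - 1 / ((t : ℝ) + 1) := rfl
      have habs : |Th t x| ≤ |Th t x - g x| + |g x| := by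
        have he : Th t x = (Th t x - g x) + g x := by ring
        calc |Th t x| = |(Th t x - g x) + g x| := by rw [← he]
          _ ≤ |Th t x - g x| + |g x| := abs_add_le _ _
      have hTh0 : |Th t x| < Real.pi / 2 - 1 / ((t : ℝ) + 1) := by
        rw [hη] at h1 h2
        linarith [habs, h1, h2]
      have hTh : |Th t x| < c t := by rw [hc']; exact hTh0
      rw [abs_lt] at hTh
      have hmin : min (c t) (Th t x) = Th t x := min_eq_right hTh.2.le
      have hmax : max (-(c t)) (Th t x) = Th t x := max_eq_right hTh.1.le
      show Real.tan (Th t x) = Real.tan (clamp t x)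
      have hcl : clamp t x = Th t x := by
        show max (-(c t)) (min (c t) (Th t x)) = Th t x
        rw [hmin, hmax]
      rw [hcl]
    have htanc : ContinuousAt Real.tan (g x) := by
      rw [Real.continuousAt_tan]
      have hio : g x ∈ Ioo (-(Real.pi / 2)) (Real.pi / 2) := by
        rw [abs_lt] at hgx
        exact ⟨hgx.1, hgx.2⟩
      exact ne_of_gt (Real.cos_pos_of_mem_Ioo hio)
    have htan : Tendsto (fun t => Real.tan (Th t x)) atTop (𝓝 (Real.tan (g x))) :=
      (htanc.tendsto).comp (hconv x)
    have hfx : Real.tan (g x) = f x := Real.tan_arctan (f x)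
    rw [hfx] at htan
    exact Filter.Tendsto.congr' evEq htan
end

section
/- Let X be a normal topological space and f : X → ℝ a Baire one function such that f(x) ≠ 0 for every x ∈ X. Then the function x ↦ 1/f(x) is also a Baire one function on X. (Consequently, f is a unit in the ring B₁(X) if and only if its zero set is empty.) -/
theorem baireOne_inv_of_ne_zero {X : Type*} [TopologicalSpace X] [NormalSpace X]
    (f : X → ℝ) (hf : IsBaireOne f) (hz : ∀ x, f x ≠ 0) :
    IsBaireOne (fun x => 1 / f x) := by
  obtain ⟨F, hFc, hFt⟩ := hf
  refine ⟨fun n x => F n x / ((F n x) ^ 2 + 1 / (n + 1)), fun n => ?_, fun x => ?_⟩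
  · apply (hFc n).div (((hFc n).pow 2).add continuous_const)
    intro x
    exact (by positivity : (0:ℝ) < F n x ^ 2 + 1 / ((n:ℝ) + 1)).ne'
  · have h1 : Filter.Tendsto (fun n : ℕ => (F n x) ^ 2 + 1 / (n + 1 : ℝ))
        Filter.atTop (nhds ((f x) ^ 2 + 0)) :=
      ((hFt x).pow 2).add tendsto_one_div_add_atTop_nhds_zero_nat
    rw [add_zero] at h1
    have h2 := (hFt x).div h1 (by simpa using pow_ne_zero 2 (hz x))
    have : f x / (f x) ^ 2 = 1 / f x := by
      rw [sq, div_mul_eq_div_div_swap, div_self (hz x)]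
    rwa [this] at h2
end

section
/- Let X be a topological space on which every Baire one function f : X → ℝ is bounded. Then for every continuous function f : X → ℝ and every real number r, r is not a limit point of the range f(X); that is, r does not lie in the closure of f(X) \ {r}. -/
theorem no_limit_point_of_range_of_baireOne_bounded {X : Type*} [TopologicalSpace X]
    (hbd : ∀ f : X → ℝ, IsBaireOne f → ∃ M : ℝ, ∀ x, |f x| ≤ M) :
    ∀ f : X → ℝ, Continuous f → ∀ r : ℝ, r ∉ closure ((Set.range f) \ {r}) := by
  intro f hf r hr
  -- the reciprocal function
  set g : X → ℝ := fun x => if f x = r then 0 else (f x - r)⁻¹ with hg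
  have hB : IsBaireOne g := by
    refine ⟨fun n x => (f x - r) / ((f x - r) ^ 2 + ((n : ℝ) + 1)⁻¹), fun n => ?_, fun x => ?_⟩
    · apply Continuous.div (by continuity) (by continuity)
      intro x
      have h1 : (0:ℝ) < ((n : ℝ) + 1)⁻¹ := by positivity
      have h2 : (0:ℝ) ≤ (f x - r) ^ 2 := sq_nonneg _
      nlinarith
    · have htend : Filter.Tendsto (fun n : ℕ => ((n : ℝ) + 1)⁻¹) Filter.atTop (nhds 0) :=
        tendsto_one_div_add_atTop_nhds_zero_nat.congr (fun n => by rw [one_div])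
      by_cases hx : f x = r
      · have : (fun n : ℕ => (f x - r) / ((f x - r) ^ 2 + ((n : ℝ) + 1)⁻¹)) = fun n : ℕ => 0 := by
          funext n; simp [hx]
        rw [this]
        simp [hg, hx]
      · have hne : f x - r ≠ 0 := sub_ne_zero_of_ne hx
        have hd : Filter.Tendsto (fun n : ℕ => (f x - r) ^ 2 + ((n : ℝ) + 1)⁻¹)
            Filter.atTop (nhds ((f x - r) ^ 2 + 0)) := tendsto_const_nhds.add htend
        have := (tendsto_const_nhds (x := f x - r) (f := Filter.atTop (α := ℕ))).div hd
          (by simpa using pow_ne_zero 2 hne)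
        simp only [add_zero] at this
        have heq : (f x - r) / (f x - r) ^ 2 = (f x - r)⁻¹ := by
          rw [sq]; field_simp
        rw [heq] at this
        simpa [hg, hx, Pi.div_def] using this
  obtain ⟨M, hM⟩ := hbd g hB
  -- get a point in the set to show M ≥ 0
  have hne : ((Set.range f) \ {r}).Nonempty := by
    by_contra h
    rw [Set.not_nonempty_iff_eq_empty] at h
    simp [h] at hr
  obtain ⟨y, hy⟩ := hne
  obtain ⟨x0, rfl⟩ := hy.1
  have hM0 : 0 ≤ M := (abs_nonneg _).trans (hM x0)
  -- pick a point with |f x - r| < (M+1)⁻¹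
  rw [Metric.mem_closure_iff] at hr
  obtain ⟨y, hy, hdist⟩ := hr (((M:ℝ) + 1)⁻¹) (by positivity)
  obtain ⟨x, rfl⟩ := hy.1
  have hxr : f x ≠ r := hy.2
  have hlt : |f x - r| < (M + 1)⁻¹ := by
    rw [Real.dist_eq, abs_sub_comm] at hdist; exact hdist
  have habs : 0 < |f x - r| := abs_pos.mpr (sub_ne_zero_of_ne hxr)
  have : M + 1 < |f x - r|⁻¹ := by
    rw [lt_inv_comm₀ (by positivity) habs]; exact hlt
  have hgx : |g x| = |f x - r|⁻¹ := by simp [hg, hxr, abs_inv]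
  have := hM x
  rw [hgx] at this
  linarith
end

section
/- Let X be a topological space on which every Baire one function f : X → ℝ is bounded, and suppose there exists a non-constant continuous function f : X → ℝ. Then X is not connected. -/
theorem not_connected_of_baireOne_bounded {X : Type*} [TopologicalSpace X]
    (hbd : ∀ f : X → ℝ, IsBaireOne f → ∃ M : ℝ, ∀ x, |f x| ≤ M)
    (f : X → ℝ) (hf : Continuous f) (hnc : ∃ x y : X, f x ≠ f y) :
    ¬ ConnectedSpace X := by
  intro hconn
  obtain ⟨a, b, hab⟩ := hnc
  -- WLOG f a < f b
  wlog hlt : f a < f b generalizing a b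
  · exact this b a hab.symm (lt_of_le_of_ne (not_lt.mp hlt) hab.symm)
  set c : ℝ := f a
  set g : X → ℝ := fun x => (f x - c)⁻¹ with hg
  have hbaire : IsBaireOne g := by
    refine ⟨fun n x => (f x - c) / ((f x - c) ^ 2 + 1 / (n + 1)), fun n => ?_, fun x => ?_⟩
    · apply Continuous.div (by fun_prop) (by fun_prop)
      intro x
      have h1 : (0:ℝ) < 1 / (n + 1) := by positivity
      positivity
    · by_cases hx : f x - c = 0
      · simp only [hx, zero_div, hg]
        simpa [hx] using tendsto_const_nhds (α := ℕ) (f := Filter.atTop) (a := (0:ℝ))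
      · have h0 : Filter.Tendsto (fun n : ℕ => 1 / ((n:ℝ) + 1)) Filter.atTop (nhds 0) :=
          tendsto_one_div_add_atTop_nhds_zero_nat
        have hc : ContinuousAt (fun t : ℝ => (f x - c) / ((f x - c) ^ 2 + t)) 0 := by
          apply ContinuousAt.div continuousAt_const (by fun_prop)
          simpa using pow_ne_zero 2 hx
        have := hc.tendsto.comp h0
        simp only [Function.comp_def] at this
        simp only [hg, add_zero, div_eq_mul_inv, sq] at this ⊢
        convert this using 2
        rw [mul_inv, ← mul_assoc, mul_inv_cancel₀ hx, one_mul]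
  obtain ⟨M, hM⟩ := hbd g hbaire
  have hM0 : (0:ℝ) ≤ M := (abs_nonneg _).trans (hM a)
  set δ : ℝ := min ((f b - c) / 2) (1 / (M + 1)) with hδ
  have hδpos : 0 < δ := lt_min (by linarith) (by positivity)
  have hδle : δ ≤ 1 / (M + 1) := min_le_right _ _
  have hmem : c + δ ∈ Set.Icc (f a) (f b) := by
    constructor
    · simp only [hδ]; linarith
    · have : δ ≤ (f b - c) / 2 := min_le_left _ _
      simp only [hδ] at this ⊢
      linarith [hδpos]
  obtain ⟨x, hx⟩ := intermediate_value_univ a b hf hmem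
  have hgx : g x = δ⁻¹ := by simp [hg, hx]
  have h1 : |g x| = δ⁻¹ := by rw [hgx, abs_of_pos (by positivity)]
  have h2 : M + 1 ≤ δ⁻¹ := by
    rw [le_inv_comm₀ (by positivity) hδpos]
    simpa using hδle
  have := hM x
  rw [h1] at this
  linarith
end

section
/- Let X be a completely Hausdorff topological space, i.e., for any two distinct points x, y ∈ X there exists a continuous function f : X → ℝ with f(x) = 0 and f(y) = 1. If every Baire one function g : X → ℝ is bounded, then X is totally disconnected (every connected subset of X has at most one point). -/
theorem totallyDisconnected_of_baireOne_bounded {X : Type*} [TopologicalSpace X]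
    (hch : ∀ x y : X, x ≠ y → ∃ f : X → ℝ, Continuous f ∧ f x = 0 ∧ f y = 1)
    (hbd : ∀ g : X → ℝ, IsBaireOne g → ∃ M : ℝ, ∀ x, |g x| ≤ M) :
    ∀ S : Set X, IsConnected S → S.Subsingleton := by
  intro S hS x hx y hy
  by_contra hxy
  obtain ⟨f, hf, hfx, hfy⟩ := hch x y hxy
  set g : X → ℝ := fun z => if f z = 1/2 then 0 else (f z - 1/2)⁻¹ with hg
  have hBaire : IsBaireOne g := by
    refine ⟨fun n z => (f z - 1/2) / ((f z - 1/2)^2 + 1/(n+1)), fun n => ?_, fun z => ?_⟩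
    · apply Continuous.div ((hf.sub continuous_const))
        (((hf.sub continuous_const).pow 2).add continuous_const)
      intro z
      show (f z - 1/2)^2 + 1/((n:ℝ)+1) ≠ 0
      have h1 : (0:ℝ) < 1/(n+1) := by positivity
      nlinarith [sq_nonneg (f z - 1/2)]
    · have htend : Filter.Tendsto (fun n : ℕ => (1:ℝ)/(n+1)) Filter.atTop (nhds 0) :=
        tendsto_one_div_add_atTop_nhds_zero_nat
      by_cases h : f z = 1/2
      · simp only [hg, h, sub_self, zero_div, if_pos rfl]
        exact tendsto_const_nhds.congr (fun n => by norm_num)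
      · have ha : f z - 1/2 ≠ 0 := sub_ne_zero.mpr h
        have hden : Filter.Tendsto (fun n : ℕ => (f z - 1/2)^2 + 1/(n+1)) Filter.atTop
            (nhds ((f z - 1/2)^2)) := by
          simpa using (htend.const_add ((f z - 1/2)^2))
        have := (tendsto_const_nhds : Filter.Tendsto (fun _ : ℕ => f z - 1/2)
          Filter.atTop (nhds (f z - 1/2))).div hden (pow_ne_zero 2 ha)
        have heq : (f z - 1/2) / (f z - 1/2)^2 = (f z - 1/2)⁻¹ := by
          rw [sq, div_mul_cancel_left₀ ha]
        simp only [hg, if_neg h]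
        exact heq ▸ this
  obtain ⟨M, hM⟩ := hbd g hBaire
  have hM0 : (0:ℝ) ≤ M := le_trans (abs_nonneg _) (hM x)
  have himg : Set.Icc (0:ℝ) 1 ⊆ f '' S := by
    have hconn : IsPreconnected (f '' S) := (hS.image f hf.continuousOn).isPreconnected
    exact hconn.Icc_subset ⟨x, hx, hfx⟩ ⟨y, hy, hfy⟩
  set ε : ℝ := min (1/2) (1/(M+1)) with hε
  have hε0 : 0 < ε := by
    apply lt_min (by norm_num)
    positivity
  have hεhalf : ε ≤ 1/2 := min_le_left _ _
  have hmem : (1/2 + ε : ℝ) ∈ Set.Icc (0:ℝ) 1 := by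
    constructor <;> [linarith; linarith]
  obtain ⟨z, hz, hfz⟩ := himg hmem
  have hne : f z ≠ 1/2 := by rw [hfz]; linarith
  have hgz : g z = ε⁻¹ := by
    simp only [hg, if_neg hne, hfz]
    norm_num
  have hεM : ε ≤ 1/(M+1) := min_le_right _ _
  have hinv : M + 1 ≤ ε⁻¹ := by
    rw [le_inv_comm₀ (by linarith) hε0]
    simpa [one_div] using hεM
  have := hM z
  rw [hgz, abs_of_pos (by positivity)] at this
  linarith
end

section
/- Let X be any topological space, and let (f_k)_{k≥1} be a sequence of Baire one functions f_k : X → ℝ. Suppose there are positive reals M_k with ∑_{k=1}^∞ M_k < ∞ and |f_k(x)| ≤ M_k for all k and all x ∈ X. Then the function f(x) = ∑_{k=1}^∞ f_k(x) is a Baire one function on X. -/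
theorem baireOne_tsum {X : Type*} [TopologicalSpace X]
    (f : ℕ → X → ℝ) (hf : ∀ k, IsBaireOne (f k))
    (M : ℕ → ℝ) (hMpos : ∀ k, 0 < M k) (hMsum : Summable M)
    (hbd : ∀ k x, |f k x| ≤ M k) :
    IsBaireOne (fun x => ∑' k, f k x) := by
  choose g hgc hgt using hf
  -- clamped approximants
  set G : ℕ → ℕ → X → ℝ := fun k n x => max (-(M k)) (min (M k) (g k n x)) with hG
  have hGc : ∀ k n, Continuous (G k n) := fun k n =>
    continuous_const.max (continuous_const.min (hgc k n))
  have hGbd : ∀ k n x, |G k n x| ≤ M k := by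
    intro k n x
    rw [abs_le]
    constructor
    · exact le_max_left _ _
    · exact max_le (by linarith [hMpos k]) (min_le_left _ _)
  have hGt : ∀ k x, Filter.Tendsto (fun n => G k n x) Filter.atTop (nhds (f k x)) := by
    intro k x
    have h1 : Filter.Tendsto (fun n => max (-(M k)) (min (M k) (g k n x))) Filter.atTop
        (nhds (max (-(M k)) (min (M k) (f k x)))) :=
      Filter.Tendsto.max tendsto_const_nhds (Filter.Tendsto.min tendsto_const_nhds (hgt k x))
    have h2 : max (-(M k)) (min (M k) (f k x)) = f k x := by
      have := abs_le.1 (hbd k x)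
      rw [min_eq_right this.2, max_eq_right this.1]
    rwa [h2] at h1
  refine ⟨fun n x => ∑ k ∈ Finset.range n, G k n x, fun n => by
    exact continuous_finset_sum _ fun k _ => hGc k n, ?_⟩
  intro x
  have key : Filter.Tendsto (fun n => ∑' k, (if k < n then G k n x else 0)) Filter.atTop
      (nhds (∑' k, f k x)) := by
    apply tendsto_tsum_of_dominated_convergence hMsum
    · intro k
      have hev : ∀ᶠ n in Filter.atTop, (if k < n then G k n x else 0) = G k n x := by
        filter_upwards [Filter.eventually_gt_atTop k] with n hn
        simp [hn]
      exact ((hGt k x).congr' (Filter.EventuallyEq.symm hev))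
    · filter_upwards with n k
      by_cases h : k < n
      · simpa [h, Real.norm_eq_abs] using hGbd k n x
      · simp [h, (hMpos k).le]
  refine key.congr fun n => ?_
  rw [tsum_eq_sum (s := Finset.range n) (fun k hk => by
    simp [Finset.mem_range.not.mp hk])]
  exact Finset.sum_congr rfl fun k hk => by simp [Finset.mem_range.mp hk]
end

section
/- Let X be any topological space and (f_n)_{n≥1} a sequence of Baire one functions f_n : X → ℝ. Then there exists a Baire one function g : X → ℝ such that Z(g) = ⋂_{n=1}^∞ Z(f_n); that is, the collection of zero sets of Baire one functions on X is closed under countable intersection. -/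
open Filter Finset

lemma trunc_nonneg (t : ℝ) : 0 ≤ min |t| 1 := le_min (abs_nonneg t) one_pos.le

lemma trunc_le_one (t : ℝ) : min |t| 1 ≤ 1 := min_le_right _ _

lemma trunc_eq_zero_iff (t : ℝ) : min |t| 1 = 0 ↔ t = 0 := by
  constructor
  · intro h
    by_contra ht
    have : 0 < min |t| 1 := lt_min (abs_pos.mpr ht) one_pos
    linarith
  · intro h; simp [h]

theorem zeroSets_closed_under_countable_inter {X : Type*} [TopologicalSpace X]
    (f : ℕ → X → ℝ) (hf : ∀ n, IsBaireOne (f n)) :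
    ∃ g : X → ℝ, IsBaireOne g ∧ {x : X | g x = 0} = ⋂ n, {x : X | f n x = 0} := by
  choose F hc ht using hf
  set h : ℕ → X → ℝ := fun n x => min |f n x| 1 with hh
  have hterm_nonneg : ∀ n x, 0 ≤ (1/2:ℝ)^n * h n x :=
    fun n x => mul_nonneg (by positivity) (trunc_nonneg _)
  have hterm_le : ∀ n x, (1/2:ℝ)^n * h n x ≤ (1/2:ℝ)^n := by
    intro n x
    calc (1/2:ℝ)^n * h n x ≤ (1/2:ℝ)^n * 1 :=
          mul_le_mul_of_nonneg_left (trunc_le_one _) (by positivity)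
      _ = (1/2:ℝ)^n := mul_one _
  have hgeo : Summable (fun n => (1/2:ℝ)^n) :=
    summable_geometric_of_lt_one (by norm_num) (by norm_num)
  have hsum : ∀ x, Summable (fun n => (1/2:ℝ)^n * h n x) := by
    intro x
    exact Summable.of_nonneg_of_le (fun n => hterm_nonneg n x) (fun n => hterm_le n x) hgeo
  refine ⟨fun x => ∑' n, (1/2:ℝ)^n * h n x, ?_, ?_⟩
  · -- Baire one
    refine ⟨fun k x => ∑ n ∈ Finset.range (k+1), (1/2:ℝ)^n * min |F n k x| 1, ?_, ?_⟩
    · intro k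
      exact continuous_finset_sum _ fun n _ =>
        continuous_const.mul ((hc n k).abs.min continuous_const)
    · intro x
      rw [Metric.tendsto_atTop]
      intro ε hε
      obtain ⟨N, hN⟩ := exists_pow_lt_of_lt_one (show (0:ℝ) < ε/8 by linarith)
        (by norm_num : (1/2:ℝ) < 1)
      -- for each n < N, the truncations converge
      have hconv : ∀ n, Filter.Tendsto (fun k => min |F n k x| 1) atTop (nhds (h n x)) := by
        intro n
        exact ((continuous_abs.min continuous_const).tendsto _).comp (ht n x)
      have hev : ∀ᶠ k in atTop, ∀ n ∈ Finset.range N,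
          |min |F n k x| 1 - h n x| < ε/8 := by
        rw [Finset.eventually_all]
        intro n _
        have := (Metric.tendsto_atTop.mp (hconv n)) (ε/8) (by linarith)
        obtain ⟨K, hK⟩ := this
        filter_upwards [eventually_ge_atTop K] with k hk
        have := hK k hk
        rwa [Real.dist_eq] at this
      obtain ⟨K, hK⟩ := eventually_atTop.mp hev
      refine ⟨max K N, fun k hk => ?_⟩
      have hkK : K ≤ k := le_trans (le_max_left _ _) hk
      have hkN : N ≤ k := le_trans (le_max_right _ _) hk
      rw [Real.dist_eq]
      -- decompose g x
      have hsplit := Summable.sum_add_tsum_nat_add (f := fun n => (1/2:ℝ)^n * h n x) (k+1) (hsum x)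
      set T : ℝ := ∑' i, (1/2:ℝ)^(i + (k+1)) * h (i + (k+1)) x with hT
      have hgx : (∑' n, (1/2:ℝ)^n * h n x) =
          (∑ n ∈ Finset.range (k+1), (1/2:ℝ)^n * h n x) + T := by
        rw [← hsplit]
      -- bound on T
      have hT_nonneg : 0 ≤ T :=
        tsum_nonneg fun i => hterm_nonneg _ x
      have hT_le : T ≤ (1/2:ℝ)^k := by
        have h1 : T ≤ ∑' i, (1/2:ℝ)^(i + (k+1)) := by
          apply Summable.tsum_le_tsum (fun i => hterm_le _ x)
            ((hsum x).comp_injective (add_left_injective (k+1)))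
          exact (summable_nat_add_iff (k+1)).mpr hgeo
        have h2 : (∑' i, (1/2:ℝ)^(i + (k+1))) = (1/2:ℝ)^(k+1) * 2 := by
          have : ∀ i, (1/2:ℝ)^(i + (k+1)) = (1/2:ℝ)^(k+1) * (1/2:ℝ)^i := by
            intro i; rw [pow_add, mul_comm]
          rw [tsum_congr this, tsum_mul_left, tsum_geometric_of_lt_one (by norm_num) (by norm_num)]
          norm_num
        have h3 : (1/2:ℝ)^(k+1) * 2 = (1/2:ℝ)^k := by
          rw [pow_succ]; ring
        linarith
      -- bound on the finite-sum difference
      have hdiff_le : ∀ n, |min |F n k x| 1 - h n x| ≤ 1 := by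
        intro n
        rw [abs_sub_le_iff]
        constructor
        · have := trunc_le_one (F n k x); have := trunc_nonneg (f n x); simp only [hh]; linarith
        · have := trunc_le_one (f n x); have := trunc_nonneg (F n k x); simp only [hh]; linarith
      have key : |∑ n ∈ Finset.range (k+1),
          ((1/2:ℝ)^n * min |F n k x| 1 - (1/2:ℝ)^n * h n x)| < ε/4 + ε/4 := by
        calc |∑ n ∈ Finset.range (k+1), ((1/2:ℝ)^n * min |F n k x| 1 - (1/2:ℝ)^n * h n x)|
            ≤ ∑ n ∈ Finset.range (k+1), |(1/2:ℝ)^n * min |F n k x| 1 - (1/2:ℝ)^n * h n x| :=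
              Finset.abs_sum_le_sum_abs _ _
          _ = ∑ n ∈ Finset.range (k+1), (1/2:ℝ)^n * |min |F n k x| 1 - h n x| := by
              apply Finset.sum_congr rfl
              intro n _
              rw [← mul_sub, abs_mul, abs_of_nonneg (by positivity : (0:ℝ) ≤ (1/2:ℝ)^n)]
          _ = (∑ n ∈ Finset.range N, (1/2:ℝ)^n * |min |F n k x| 1 - h n x|)
              + ∑ n ∈ Finset.Ico N (k+1), (1/2:ℝ)^n * |min |F n k x| 1 - h n x| := by
              rw [Finset.sum_range_add_sum_Ico _ (by omega : N ≤ k+1)]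
          _ < ε/4 + ε/4 := by
              apply add_lt_add_of_le_of_lt
              · calc (∑ n ∈ Finset.range N, (1/2:ℝ)^n * |min |F n k x| 1 - h n x|)
                    ≤ ∑ n ∈ Finset.range N, (1/2:ℝ)^n * (ε/8) := by
                      apply Finset.sum_le_sum
                      intro n hn
                      exact mul_le_mul_of_nonneg_left (le_of_lt (hK k hkK n hn)) (by positivity)
                  _ = (∑ n ∈ Finset.range N, (1/2:ℝ)^n) * (ε/8) := by
                      rw [← Finset.sum_mul]
                  _ ≤ 2 * (ε/8) := by
                      apply mul_le_mul_of_nonneg_right (sum_geometric_two_le N) (by linarith)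
                  _ = ε/4 := by ring
              · calc (∑ n ∈ Finset.Ico N (k+1), (1/2:ℝ)^n * |min |F n k x| 1 - h n x|)
                    ≤ ∑ n ∈ Finset.Ico N (k+1), (1/2:ℝ)^n := by
                      apply Finset.sum_le_sum
                      intro n _
                      calc (1/2:ℝ)^n * |min |F n k x| 1 - h n x| ≤ (1/2:ℝ)^n * 1 :=
                            mul_le_mul_of_nonneg_left (hdiff_le n) (by positivity)
                        _ = (1/2:ℝ)^n := mul_one _
                  _ = ∑ i ∈ Finset.range (k+1-N), (1/2:ℝ)^(N+i) := by
                      rw [Finset.sum_Ico_eq_sum_range]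
                  _ = (1/2:ℝ)^N * ∑ i ∈ Finset.range (k+1-N), (1/2:ℝ)^i := by
                      rw [Finset.mul_sum]
                      apply Finset.sum_congr rfl
                      intro i _; rw [pow_add]
                  _ ≤ (1/2:ℝ)^N * 2 :=
                      mul_le_mul_of_nonneg_left (sum_geometric_two_le _) (by positivity)
                  _ < ε/4 := by linarith
      have hTN : T < ε/8 := by
        have : (1/2:ℝ)^k ≤ (1/2:ℝ)^N :=
          pow_le_pow_of_le_one (by norm_num) (by norm_num) hkN
        linarith
      calc |(∑ n ∈ Finset.range (k+1), (1/2:ℝ)^n * min |F n k x| 1) - ∑' n, (1/2:ℝ)^n * h n x|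
          = |(∑ n ∈ Finset.range (k+1),
              ((1/2:ℝ)^n * min |F n k x| 1 - (1/2:ℝ)^n * h n x)) - T| := by
            rw [hgx, Finset.sum_sub_distrib]
            congr 1
            ring
        _ ≤ |∑ n ∈ Finset.range (k+1),
              ((1/2:ℝ)^n * min |F n k x| 1 - (1/2:ℝ)^n * h n x)| + |T| := abs_sub _ _
        _ < (ε/4 + ε/4) + ε/8 := by
            apply add_lt_add key
            rwa [abs_of_nonneg hT_nonneg]
        _ < ε := by linarith
  · -- zero set
    ext x
    simp only [Set.mem_setOf_eq, Set.mem_iInter]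
    constructor
    · intro hx n
      have h1 : (1/2:ℝ)^n * h n x ≤ 0 := by
        have := Summable.le_tsum (hsum x) n (fun m _ => hterm_nonneg m x)
        rw [hx] at this
        exact this
      have h2 : 0 ≤ (1/2:ℝ)^n * h n x := hterm_nonneg n x
      have h3 : (1/2:ℝ)^n * h n x = 0 := le_antisymm h1 h2
      have h4 : h n x = 0 := by
        have hp : (0:ℝ) < (1/2:ℝ)^n := by positivity
        nlinarith [hterm_nonneg n x, trunc_nonneg (f n x)]
      exact (trunc_eq_zero_iff _).mp h4
    · intro hx
      have : ∀ n, (1/2:ℝ)^n * h n x = 0 := by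
        intro n; simp [hh, hx n]
      simp only [this, tsum_zero]
end

section
/- Let X be any topological space and A, B ⊆ X. Then A and B are completely separated in X by B₁(X) if and only if there exist Baire one functions f, g : X → ℝ such that A ⊆ Z(f), B ⊆ Z(g), and Z(f) ∩ Z(g) = ∅. -/
/-- Two subsets `A`, `B` of `X` are *completely separated by `B₁(X)`* if there is a
Baire one function `h : X → ℝ` with `0 ≤ h ≤ 1`, `h = 0` on `A` and `h = 1` on `B`. -/
def CompletelySeparatedB1 {X : Type*} [TopologicalSpace X] (A B : Set X) : Prop :=
  ∃ h : X → ℝ, IsBaireOne h ∧ (∀ x, 0 ≤ h x ∧ h x ≤ 1) ∧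
    (∀ x ∈ A, h x = 0) ∧ (∀ x ∈ B, h x = 1)

theorem completelySeparatedB1_iff_disjoint_zeroSets {X : Type*} [TopologicalSpace X]
    (A B : Set X) :
    CompletelySeparatedB1 A B ↔
      ∃ f g : X → ℝ, IsBaireOne f ∧ IsBaireOne g ∧
        A ⊆ {x : X | f x = 0} ∧ B ⊆ {x : X | g x = 0} ∧
        {x : X | f x = 0} ∩ {x : X | g x = 0} = ∅ := by
  constructor
  · rintro ⟨h, ⟨F, hFc, hFt⟩, hb, hA, hB⟩
    refine ⟨h, fun x => h x - 1, ⟨F, hFc, hFt⟩,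
      ⟨fun n x => F n x - 1, fun n => (hFc n).sub continuous_const,
        fun x => (hFt x).sub tendsto_const_nhds⟩,
      fun x hx => hA x hx, fun x hx => by simp [hB x hx], ?_⟩
    ext x
    simp only [Set.mem_inter_iff, Set.mem_setOf_eq, Set.mem_empty_iff_false, iff_false]
    rintro ⟨h0, h1⟩
    rw [h0] at h1; norm_num at h1
  · rintro ⟨f, g, ⟨F, hFc, hFt⟩, ⟨G, hGc, hGt⟩, hA, hB, hdisj⟩
    have hpos : ∀ x : X, 0 < |f x| + |g x| := by
      intro x
      rcases lt_or_eq_of_le (abs_nonneg (f x)) with hf | hf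
      · exact add_pos_of_pos_of_nonneg hf (abs_nonneg _)
      · rcases lt_or_eq_of_le (abs_nonneg (g x)) with hg | hg
        · exact add_pos_of_nonneg_of_pos (abs_nonneg _) hg
        · exfalso
          have : x ∈ ({x : X | f x = 0} ∩ {x : X | g x = 0}) :=
            ⟨abs_eq_zero.mp hf.symm, abs_eq_zero.mp hg.symm⟩
          rw [hdisj] at this; exact this
    refine ⟨fun x => |f x| / (|f x| + |g x|), ?_, ?_, ?_, ?_⟩
    · refine ⟨fun n x => |F n x| / (|F n x| + |G n x| + 1 / (n + 1)), ?_, ?_⟩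
      · intro n
        refine ((hFc n).abs.div (((hFc n).abs.add (hGc n).abs).add continuous_const) ?_)
        intro x
        positivity
      · intro x
        have h1 : Filter.Tendsto (fun n : ℕ => |F n x|) Filter.atTop (nhds |f x|) :=
          (hFt x).abs
        have h2 : Filter.Tendsto (fun n : ℕ => |G n x|) Filter.atTop (nhds |g x|) :=
          (hGt x).abs
        have h3 : Filter.Tendsto (fun n : ℕ => (1 : ℝ) / (n + 1)) Filter.atTop (nhds 0) :=
          tendsto_one_div_add_atTop_nhds_zero_nat
        have := h1.div (((h1.add h2).add h3)) (by simpa using (hpos x).ne')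
        simpa only [add_zero, Pi.div_def] using this
    · intro x
      constructor
      · positivity
      · rw [div_le_one (hpos x)]
        simpa using abs_nonneg (g x)
    · intro x hx
      have : f x = 0 := hA hx
      simp [this]
    · intro x hx
      have hg : g x = 0 := hB hx
      have hf : f x ≠ 0 := by
        intro h0
        have : x ∈ ({x : X | f x = 0} ∩ {x : X | g x = 0}) := ⟨h0, hg⟩
        rw [hdisj] at this; exact this
      simp only [hg, abs_zero, add_zero]
      exact div_self (abs_ne_zero.mpr hf)
end

section
/- Let X be a topological space and Y ⊆ X a subset that is B₁-embedded in X. Then Y is B₁*-embedded in X. -/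
/-- `Y` is *B₁-embedded* in `X` if every Baire one function on the subspace `Y`
extends to a Baire one function on `X`. -/
def B1Embedded {X : Type*} [TopologicalSpace X] (Y : Set X) : Prop :=
  ∀ f : Y → ℝ, IsBaireOne f → ∃ g : X → ℝ, IsBaireOne g ∧ ∀ y : Y, g y = f y

/-- `Y` is *B₁*-embedded* in `X` if every bounded Baire one function on the subspace `Y`
extends to a bounded Baire one function on `X`. -/
def B1StarEmbedded {X : Type*} [TopologicalSpace X] (Y : Set X) : Prop :=
  ∀ f : Y → ℝ, IsBaireOne f → (∃ M : ℝ, ∀ y : Y, |f y| ≤ M) →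
    ∃ g : X → ℝ, IsBaireOne g ∧ (∃ M : ℝ, ∀ x : X, |g x| ≤ M) ∧ ∀ y : Y, g y = f y

theorem b1StarEmbedded_of_b1Embedded {X : Type*} [TopologicalSpace X] (Y : Set X)
    (hY : B1Embedded Y) : B1StarEmbedded Y := by
  intro f hf ⟨M, hM⟩
  obtain ⟨g, ⟨F, hFc, hFt⟩, hg⟩ := hY f hf
  set M₀ : ℝ := max M 0 with hM₀
  have hMM₀ : M ≤ M₀ := le_max_left _ _
  have h0 : (0 : ℝ) ≤ M₀ := le_max_right _ _
  set c : ℝ → ℝ := fun t => max (-M₀) (min M₀ t) with hc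
  have hcc : Continuous c := continuous_const.max (continuous_const.min continuous_id)
  refine ⟨fun x => c (g x), ⟨fun n x => c (F n x), fun n => hcc.comp (hFc n), fun x =>
    (hcc.tendsto _).comp (hFt x)⟩, ⟨M₀, fun x => ?_⟩, fun y => ?_⟩
  · rw [abs_le]
    constructor
    · exact le_max_left _ _
    · exact max_le (by linarith) (min_le_left _ _)
  · have := hM y
    rw [abs_le] at this
    have h1 : |f y| ≤ M₀ := (hM y).trans hMM₀
    rw [abs_le] at h1
    simp only [hc, hg y]
    rw [min_eq_right h1.2, max_eq_right (by linarith [h1.1])]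
end
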